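/- An S-act A is strongly Hopfian if and only if for every S-endomorphism f of A there exists n ≥ 1 such that I_{f^n} ∩ K_{f^n} = Δ_A. -/
import Mathlib


structure RAct (S : Type*) [Monoid S] (A : Type*) where
  act : A → S → A
  act_one : ∀ a, act a 1 = a
  act_mul : ∀ a s t, act a (s * t) = act (act a s) t

variable {S : Type*} [Monoid S] {A B : Type*}

/-- `f` is an S-act homomorphism from `M` to `N`. -/
def IsHom (M : RAct S A) (N : RAct S B) (f : A → B) : Prop :=
  ∀ a s, f (M.act a s) = N.act (f a) s

/-- `f` is an S-act endomorphism of `M`. -/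
def IsEnd (M : RAct S A) (f : A → A) : Prop := IsHom M M f

/-- `r` is a congruence on the S-act `M`. -/
def IsCong (M : RAct S A) (r : A → A → Prop) : Prop :=
  Equivalence r ∧ ∀ a b s, r a b → r (M.act a s) (M.act b s)

/-- The kernel congruence `K_f`. -/
def kerC {A : Type*} (f : A → A) : A → A → Prop := fun a b => f a = f b

/-- The image congruence `I_f = (im f × im f) ∪ Δ`. -/
def imC {A : Type*} (f : A → A) : A → A → Prop :=
  fun a b => a = b ∨ (a ∈ Set.range f ∧ b ∈ Set.range f)

/-- The diagonal relation. -/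
def diagR (A : Type*) : A → A → Prop := fun a b => a = b

/-- The full relation. -/
def fullR (A : Type*) : A → A → Prop := fun _ _ => True

/-- `M` is strongly Hopfian: the chain `K_f ⊆ K_{f²} ⊆ ⋯` stabilizes for every endomorphism. -/
def StronglyHopfian (M : RAct S A) : Prop :=
  ∀ f : A → A, IsEnd M f → ∃ n : ℕ, 1 ≤ n ∧ ∀ m, n ≤ m → kerC (f^[m]) = kerC (f^[n])

/-- `M` is strongly co-Hopfian: the chain `I_f ⊇ I_{f²} ⊇ ⋯` stabilizes for every endomorphism. -/
def StronglyCoHopfian (M : RAct S A) : Prop :=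
  ∀ f : A → A, IsEnd M f → ∃ n : ℕ, 1 ≤ n ∧ ∀ m, n ≤ m → imC (f^[m]) = imC (f^[n])

/-- `M` is Hopfian: every surjective endomorphism is injective. -/
def Hopfian (M : RAct S A) : Prop :=
  ∀ f : A → A, IsEnd M f → Function.Surjective f → Function.Injective f

/-- `M` is co-Hopfian: every injective endomorphism is surjective. -/
def CoHopfian (M : RAct S A) : Prop :=
  ∀ f : A → A, IsEnd M f → Function.Injective f → Function.Surjective f

/-- ACC on congruences. -/
def NoetherianAct (M : RAct S A) : Prop :=
  ∀ c : ℕ → (A → A → Prop), (∀ n, IsCong M (c n)) →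
    (∀ n a b, c n a b → c (n + 1) a b) → ∃ N, ∀ m, N ≤ m → c m = c N

/-- DCC on congruences. -/
def ArtinianAct (M : RAct S A) : Prop :=
  ∀ c : ℕ → (A → A → Prop), (∀ n, IsCong M (c n)) →
    (∀ n a b, c (n + 1) a b → c n a b) → ∃ N, ∀ m, N ≤ m → c m = c N

/-- The monoid `S` as a right act over itself. -/
def mulAct (S : Type*) [Monoid S] : RAct S S :=
  ⟨fun x s => x * s, mul_one, fun a s t => (mul_assoc a s t).symm⟩
theorem stmt7 (M : RAct S A) :
    StronglyHopfian M ↔ ∀ f : A → A, IsEnd M f →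
      ∃ n : ℕ, 1 ≤ n ∧ ∀ a b : A, (imC (f^[n]) a b ∧ kerC (f^[n]) a b) ↔ a = b := by
  have mono : ∀ (f : A → A) (m m' : ℕ), m ≤ m' → ∀ a b, kerC (f^[m]) a b → kerC (f^[m']) a b := by
    intro f m m' hmm a b hab
    have : m' = (m' - m) + m := by omega
    rw [kerC] at hab ⊢
    rw [this, Function.iterate_add_apply, Function.iterate_add_apply, hab]
  constructor
  · intro h f hf
    obtain ⟨n, hn1, hn⟩ := h f hf
    refine ⟨n, hn1, fun a b => ⟨?_, ?_⟩⟩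
    · rintro ⟨him, hk⟩
      rcases him with rfl | ⟨⟨x, rfl⟩, ⟨y, rfl⟩⟩
      · rfl
      · have h2 : kerC (f^[n + n]) x y := by
          rw [kerC, Function.iterate_add_apply, Function.iterate_add_apply]
          exact hk
        rw [hn (n + n) (by omega)] at h2
        exact h2
    · rintro rfl; exact ⟨Or.inl rfl, rfl⟩
  · intro h f hf
    obtain ⟨n, hn1, hn⟩ := h f hf
    have shrink : ∀ k a b, kerC (f^[n + k * n]) a b → kerC (f^[n]) a b := by
      intro k
      induction k with
      | zero => simp
      | succ k ih =>
        intro a b hab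
        have h2 : kerC (f^[n + k * n]) (f^[n] a) (f^[n] b) := by
          rw [kerC, ← Function.iterate_add_apply, ← Function.iterate_add_apply]
          rw [kerC] at hab
          have : n + k * n + n = n + (k + 1) * n := by ring
          rw [this]; exact hab
        exact (hn (f^[n] a) (f^[n] b)).mp ⟨Or.inr ⟨⟨a, rfl⟩, ⟨b, rfl⟩⟩, ih _ _ h2⟩
    refine ⟨n, hn1, fun m hm => ?_⟩
    funext a b
    apply propext
    constructor
    · intro hab
      exact shrink m a b (mono f m (n + m * n) (by nlinarith) a b hab)
    · exact mono f n m hm a b
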